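/- arXiv:1901.01436 — 2 statements merged into one kernel-verified Lean document; each statement's English description precedes it below -/
import Mathlib

section
/- For j, n, m ≥ 3, the size Ramsey multipartite number satisfies m_j(S_n, S_m) ≥ ⌈(n+m-4)/(j-1)⌉, i.e., K_{j×s} ↛ (S_n, S_m) for s = ⌈(n+m-4)/(j-1)⌉ - 1 (assuming s ≥ 1). -/
/-- The complete balanced multipartite graph `K_{j×s}` on `Fin j × Fin s`:
vertices are adjacent iff they lie in different parts (different first coordinate). -/
def multiK (j s : ℕ) : SimpleGraph (Fin j × Fin s) where
  Adj u v := u.1 ≠ v.1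
  symm := ⟨fun _ _ h => h.symm⟩
  loopless := ⟨fun _ h => h rfl⟩

/-- Degree of a vertex, via `Set.ncard` of its neighbor set. -/
noncomputable def mdeg {V : Type*} (G : SimpleGraph V) (v : V) : ℕ :=
  (G.neighborSet v).ncard

/-- `K_{j×s} → (S_n, S_m)`: every red/blue edge coloring (red subgraph `R ≤ K_{j×s}`,
blue the rest) contains a red `K_{1,n-1}` or a blue `K_{1,m-1}`. -/
def Arrows (j s n m : ℕ) : Prop :=
  ∀ R : SimpleGraph (Fin j × Fin s), R ≤ multiK j s →
    (∃ v, n - 1 ≤ mdeg R v) ∨ (∃ v, m - 1 ≤ mdeg (multiK j s \ R) v)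

/-- The size Ramsey multipartite number `m_j(S_n, S_m)`. -/
noncomputable def mj (j n m : ℕ) : ℕ := sInf {s | Arrows j s n m}

open Finset

/- ### Auxiliary lemmas -/

lemma mdeg_eq_card {N : ℕ} [NeZero N] {V : Type*} (e : V → ZMod N)
    (he : Function.Bijective e) (F : Finset ℕ) (hF : ∀ k ∈ F, k < N)
    (G : SimpleGraph V) (v : V) (hAdj : ∀ u, G.Adj v u ↔ (e u - e v).val ∈ F) :
    mdeg G v = F.card := by
  have hset : G.neighborSet v = (fun u => (e u - e v).val) ⁻¹' ↑F := by
    ext u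
    simp only [SimpleGraph.mem_neighborSet, Set.mem_preimage, Finset.mem_coe, hAdj]
  rw [mdeg, hset, Set.ncard_preimage_of_injective_subset_range, Set.ncard_coe_finset]
  · intro a b hab
    apply he.injective
    have := ZMod.val_injective N hab
    exact sub_left_injective this
  · intro k hk
    simp only [Finset.mem_coe] at hk
    obtain ⟨u, hu⟩ := he.surjective ((k : ZMod N) + e v)
    exact ⟨u, by simp [hu, ZMod.val_cast_of_lt (hF k hk)]⟩

/-- Linear embedding of `Fin j × Fin s` into `ZMod (j*s)`. -/
def emb (j s : ℕ) (p : Fin j × Fin s) : ZMod (j * s) :=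
  ((p.1 : ℕ) + j * (p.2 : ℕ) : ℕ)

lemma emb_lt {j s : ℕ} (p : Fin j × Fin s) : (p.1 : ℕ) + j * (p.2 : ℕ) < j * s := by
  calc (p.1 : ℕ) + j * (p.2 : ℕ) < j + j * (p.2 : ℕ) := by
        have := p.1.isLt; omega
    _ = j * ((p.2 : ℕ) + 1) := by ring
    _ ≤ j * s := Nat.mul_le_mul_left _ p.2.isLt

lemma emb_val {j s : ℕ} (p : Fin j × Fin s) :
    (emb j s p).val = (p.1 : ℕ) + j * (p.2 : ℕ) :=
  ZMod.val_cast_of_lt (emb_lt p)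

lemma emb_bij {j s : ℕ} (hj : 0 < j) (hs : 0 < s) : Function.Bijective (emb j s) := by
  haveI : NeZero (j * s) := ⟨by positivity⟩
  rw [Fintype.bijective_iff_injective_and_card]
  refine ⟨?_, by simp⟩
  intro p q h
  have h' : (p.1 : ℕ) + j * (p.2 : ℕ) = (q.1 : ℕ) + j * (q.2 : ℕ) := by
    have := congrArg ZMod.val h
    rwa [emb_val, emb_val] at this
  have h1 : (p.1 : ℕ) = (q.1 : ℕ) := by
    have := congrArg (· % j) h'
    simpa [Nat.add_mul_mod_self_left, Nat.mod_eq_of_lt p.1.isLt,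
      Nat.mod_eq_of_lt q.1.isLt] using this
  have h2 : (p.2 : ℕ) = (q.2 : ℕ) := by
    have : j * (p.2 : ℕ) = j * (q.2 : ℕ) := by omega
    exact Nat.eq_of_mul_eq_mul_left hj this
  exact Prod.ext (Fin.ext h1) (Fin.ext h2)

lemma part_iff {j s : ℕ} (hj : 0 < j) (hs : 0 < s) (u w : Fin j × Fin s) :
    u.1 = w.1 ↔ j ∣ (emb j s u - emb j s w).val := by
  haveI : NeZero (j * s) := ⟨by positivity⟩
  have hdvd : j ∣ j * s := dvd_mul_right _ _
  have key : (((emb j s u - emb j s w).val : ℕ) : ZMod j)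
      = ((u.1 : ℕ) : ZMod j) - ((w.1 : ℕ) : ZMod j) := by
    rw [ZMod.natCast_val, ← ZMod.castHom_apply (h := hdvd), map_sub]
    simp only [emb, map_natCast]
    push_cast
    simp [ZMod.natCast_self]
  rw [← ZMod.natCast_eq_zero_iff, key, sub_eq_zero]
  constructor
  · intro h; rw [h]
  · intro h
    have := congrArg ZMod.val h
    rwa [ZMod.val_cast_of_lt u.1.isLt, ZMod.val_cast_of_lt w.1.isLt, ← Fin.ext_iff] at this

lemma card_Ioc_not_dvd (j t : ℕ) :
    ((Ioc 0 t).filter (fun k => ¬ j ∣ k)).card = t - t / j := by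
  have h := Finset.card_filter_add_card_filter_not (s := Ioc 0 t)
    (p := fun k => j ∣ k)
  rw [Nat.Ioc_filter_dvd_card_eq_div, Nat.card_Ioc] at h
  omega

lemma card_S (j s : ℕ) (hj : 0 < j) (hs : 0 < s) :
    ((Ioo 0 (j*s)).filter (fun k => ¬ j ∣ k)).card = (j-1)*s := by
  have h1 : Ioo 0 (j*s) = Ioc 0 (j*s - 1) := by
    ext k; simp [Nat.lt_iff_le_pred (show 0 < j*s by positivity)]
  rw [h1, card_Ioc_not_dvd]
  have h2 : (j*s - 1) / j = s - 1 := by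
    have h3 : j*s - 1 = j * (s-1) + (j-1) := by
      have : j * s = j * (s - 1) + j := by
        rw [← Nat.mul_succ]; congr 1; omega
      omega
    rw [h3, Nat.mul_add_div hj, Nat.div_eq_of_lt (by omega)]
    omega
  rw [h2]
  have h3 : (j-1)*s = j*s - s := by rw [Nat.sub_one_mul]
  have h4 : s ≤ j * s := Nat.le_mul_of_pos_left s hj
  omega

lemma card_T (j s t : ℕ) (hj : 0 < j) (hs : 0 < s) (h2t : 2*t ≤ j*s)
    (heq : 2*t = j*s → j ∣ t) :
    ((Ioo 0 (j*s)).filter (fun k => ¬ j ∣ k ∧ (k ≤ t ∨ j*s - t ≤ k))).card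
      = 2*(t - t/j) := by
  have hN : 0 < j * s := by positivity
  set A := (Ioo 0 (j*s)).filter (fun k => ¬ j ∣ k ∧ k ≤ t) with hA
  set B := (Ioo 0 (j*s)).filter (fun k => ¬ j ∣ k ∧ j*s - t ≤ k) with hB
  have hunion : (Ioo 0 (j*s)).filter (fun k => ¬ j ∣ k ∧ (k ≤ t ∨ j*s - t ≤ k))
      = A ∪ B := by
    ext k
    simp only [hA, hB, mem_filter, mem_union, mem_Ioo]
    tauto
  have hdisj : Disjoint A B := by
    rw [Finset.disjoint_left]
    intro k hk1 hk2
    simp only [hA, hB, mem_filter, mem_Ioo] at hk1 hk2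
    have h1 : 2*t = j*s ∧ k = t := by omega
    exact hk1.2.1 (h1.2 ▸ heq h1.1)
  have hAcard : A.card = t - t/j := by
    have hAe : A = (Ioc 0 t).filter (fun k => ¬ j ∣ k) := by
      ext k
      simp only [hA, mem_filter, mem_Ioo, mem_Ioc]
      constructor
      · rintro ⟨⟨h1, h2⟩, h3, h4⟩; exact ⟨⟨h1, h4⟩, h3⟩
      · rintro ⟨⟨h1, h4⟩, h3⟩; exact ⟨⟨h1, by omega⟩, h3, h4⟩
    rw [hAe, card_Ioc_not_dvd]
  have hBcard : B.card = A.card := by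
    apply Finset.card_bij (fun k _ => j*s - k)
    · intro k hk
      simp only [hA, hB, mem_filter, mem_Ioo] at hk ⊢
      have hjN : j ∣ j * s := dvd_mul_right _ _
      refine ⟨⟨by omega, by omega⟩, ?_, by omega⟩
      intro hdvd
      exact hk.2.1 (by
        have h5 : j ∣ j*s - (j*s - k) := Nat.dvd_sub hjN hdvd
        rwa [Nat.sub_sub_self (by omega)] at h5)
    · intro a ha b hb hab
      simp only [hB, mem_filter, mem_Ioo] at ha hb
      omega
    · intro a ha
      simp only [hA, hB, mem_filter, mem_Ioo] at ha ⊢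
      refine ⟨j*s - a, ⟨⟨by omega, by omega⟩, ?_, by omega⟩, by omega⟩
      intro hdvd
      exact ha.2.1 (by
        have h5 : j ∣ j*s - (j*s - a) := Nat.dvd_sub (dvd_mul_right _ _) hdvd
        rwa [Nat.sub_sub_self (by omega)] at h5)
  rw [hunion, Finset.card_union_of_disjoint hdisj, hAcard, hBcard, hAcard]
  ring

/- ### Lower bound: no arrowing when `(j-1)*s ≤ n+m-5` -/

lemma noArrows (j s n m : ℕ) (hj : 3 ≤ j) (hn : 3 ≤ n) (hm : 3 ≤ m)
    (hb : (j-1)*s ≤ n + m - 5) : ¬ Arrows j s n m := by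
  rcases Nat.eq_zero_or_pos s with hs0 | hs
  · subst hs0
    intro h
    rcases h ⊥ bot_le with ⟨v, _⟩ | ⟨v, _⟩ <;> exact v.2.elim0
  have hj0 : 0 < j := by omega
  haveI : NeZero (j*s) := ⟨by positivity⟩
  -- arithmetic setup
  set d := min (n-2) ((j-1)*s) with hd
  set d2 := d / 2 with hd2
  set q := d2 / (j-1) with hq
  set r := d2 % (j-1) with hr
  set t := j * q + r with ht
  have hrlt : r < j - 1 := Nat.mod_lt _ (by omega)
  have hd2eq : (j-1) * q + r = d2 := Nat.div_add_mod d2 (j-1)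
  have hjq : j * q = (j-1) * q + q := by
    rw [Nat.sub_one_mul]
    have : q ≤ j * q := Nat.le_mul_of_pos_left q hj0
    omega
  have hddle : d ≤ (j-1)*s := min_le_right _ _
  have hd2le : 2 * d2 ≤ (j-1) * s := by omega
  have hqs : 2*q ≤ s := by
    have h1 : (j-1) * (2*q) ≤ (j-1) * s := by
      have e1 : (j-1)*(2*q) = 2*((j-1)*q) := by ring
      omega
    exact Nat.le_of_mul_le_mul_left h1 (by omega)
  have hjs : j * s = (j-1)*s + s := by
    rw [Nat.sub_one_mul]
    have : s ≤ j * s := Nat.le_mul_of_pos_left s hj0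
    omega
  have h2t : 2*t ≤ j*s := by omega
  have heq : 2*t = j*s → j ∣ t := by
    intro h
    obtain ⟨k, hk⟩ : ∃ k, s = 2*q + k := ⟨s - 2*q, by omega⟩
    have hexp : j*(2*q + k) = 2*(j*q) + j*k := by ring
    have hjsk : j * s = j * (2*q+k) := by rw [← hk]
    have h2r : 2*r = j*k := by omega
    have hk1 : k ≤ 1 := by
      by_contra hc
      push_neg at hc
      have : j*2 ≤ j*k := Nat.mul_le_mul_left _ hc
      have : j*2 = 2*j := by ring
      omega
    interval_cases k
    · exact ⟨q, by omega⟩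
    · exfalso
      have hsval : s = 2*q+1 := by omega
      have h1 : (j-1)*s = (j-1)*(2*q+1) := by rw [hsval]
      have h2 : (j-1)*(2*q+1) = 2*((j-1)*q) + (j-1) := by ring
      omega
  have htdiv : t / j = q := by
    rw [ht, Nat.mul_add_div hj0, Nat.div_eq_of_lt (by omega : r < j)]
    omega
  have htq : t - t/j = d2 := by omega
  -- the finsets
  set N := j * s with hN
  set T := (Ioo 0 N).filter (fun k => ¬ j ∣ k ∧ (k ≤ t ∨ N - t ≤ k)) with hT
  set S' := (Ioo 0 N).filter (fun k => ¬ j ∣ k) with hS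
  have hTcard : T.card = 2*d2 := by
    rw [hT, hN, card_T j s t hj0 hs h2t heq, htq]
  have hScard : S'.card = (j-1)*s := card_S j s hj0 hs
  have hTsub : T ⊆ S' := by
    intro k hk
    simp only [hT, hS, mem_filter, mem_Ioo] at hk ⊢
    tauto
  have hTmem : ∀ k ∈ T, 0 < k ∧ k < N ∧ ¬ j ∣ k := by
    intro k hk
    simp only [hT, mem_filter, mem_Ioo] at hk
    tauto
  have hTsymm : ∀ k ∈ T, N - k ∈ T := by
    intro k hk
    simp only [hT, mem_filter, mem_Ioo] at hk ⊢
    obtain ⟨⟨hk0, hkN⟩, hkd, hkt⟩ := hk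
    have hNpos : 0 < N := by rw [hN]; positivity
    refine ⟨⟨by omega, by omega⟩, ?_, by omega⟩
    intro hdvd
    exact hkd (by
      have h5 : j ∣ N - (N-k) := Nat.dvd_sub (hN ▸ dvd_mul_right j s) hdvd
      rwa [Nat.sub_sub_self (by omega)] at h5)
  -- the red graph
  let R : SimpleGraph (Fin j × Fin s) :=
    { Adj := fun u w => (emb j s u - emb j s w).val ∈ T
      symm := by
        constructor
        intro u w h
        have hx : emb j s u - emb j s w ≠ 0 := by
          intro h0
          rw [h0] at h
          simp only [ZMod.val_zero] at h
          exact Nat.lt_irrefl 0 (hTmem _ h).1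
        show (emb j s w - emb j s u).val ∈ T
        have hescript : emb j s w - emb j s u = -(emb j s u - emb j s w) := by ring
        rw [hescript, ZMod.neg_val, if_neg hx]
        exact hTsymm _ h
      loopless := by
        constructor
        intro u h
        simp only [sub_self, ZMod.val_zero] at h
        exact Nat.lt_irrefl 0 (hTmem _ h).1 }
  have hRadj : ∀ v u, R.Adj v u ↔ (emb j s u - emb j s v).val ∈ T := by
    intro v u
    rw [SimpleGraph.adj_comm]
  have hRle : R ≤ multiK j s := by
    intro u w h
    have hmem := hTmem _ h
    show u.1 ≠ w.1
    intro hcontra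
    exact hmem.2.2 ((part_iff hj0 hs u w).1 hcontra)
  -- degrees
  have hvallt : ∀ x : ZMod N, x.val < N := fun x => ZMod.val_lt x
  have hRdeg : ∀ v, mdeg R v = 2*d2 := by
    intro v
    rw [mdeg_eq_card (emb j s) (emb_bij hj0 hs) T (fun k hk => (hTmem k hk).2.1) R v
      (hRadj v), hTcard]
  have hBadj : ∀ v u, (multiK j s \ R).Adj v u ↔
      (emb j s u - emb j s v).val ∈ S' \ T := by
    intro v u
    rw [SimpleGraph.sdiff_adj, mem_sdiff]
    constructor
    · rintro ⟨h1, h2⟩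
      have hne : u.1 ≠ v.1 := fun hc => h1 hc.symm
      have hnd : ¬ j ∣ (emb j s u - emb j s v).val := fun hc =>
        hne ((part_iff hj0 hs u v).2 hc)
      refine ⟨?_, fun hc => h2 ((hRadj v u).2 hc)⟩
      simp only [hS, mem_filter, mem_Ioo]
      refine ⟨⟨?_, hvallt _⟩, hnd⟩
      rcases Nat.eq_zero_or_pos ((emb j s u - emb j s v).val) with h0 | h0
      · exact absurd (h0 ▸ dvd_zero j) hnd
      · exact h0
    · rintro ⟨h1, h2⟩
      simp only [hS, mem_filter, mem_Ioo] at h1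
      have hne : u.1 ≠ v.1 := fun hc => h1.2 ((part_iff hj0 hs u v).1 hc)
      exact ⟨fun hc => hne hc.symm, fun hc => h2 ((hRadj v u).1 hc)⟩
  have hBdeg : ∀ v, mdeg (multiK j s \ R) v = (j-1)*s - 2*d2 := by
    intro v
    rw [mdeg_eq_card (emb j s) (emb_bij hj0 hs) (S' \ T)
      (fun k hk => by
        have := mem_sdiff.1 hk
        simp only [hS, mem_filter, mem_Ioo] at this
        exact this.1.1.2) (multiK j s \ R) v (hBadj v),
      Finset.card_sdiff_of_subset hTsub, hScard, hTcard]
  -- conclusion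
  intro hA
  have hdn : d ≤ n - 2 := min_le_left _ _
  have hdor : d = n - 2 ∨ d = (j-1)*s := by
    rcases min_cases (n-2) ((j-1)*s) with ⟨h1, _⟩ | ⟨h1, _⟩
    · exact Or.inl h1
    · exact Or.inr h1
  rcases hA R hRle with ⟨v, hv⟩ | ⟨v, hv⟩
  · rw [hRdeg v] at hv
    omega
  · rw [hBdeg v] at hv
    omega

/- ### Upper direction: arrowing holds for large `s` (nonemptiness of the set) -/

lemma arrows_of_big (j s n m : ℕ) (hj : 3 ≤ j) (hs0 : 0 < s)
    (hbig : n + m - 2 ≤ (j-1)*s) : Arrows j s n m := by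
  have hj0 : 0 < j := by omega
  haveI : NeZero (j*s) := ⟨by positivity⟩
  have hvallt : ∀ x : ZMod (j*s), x.val < j*s := fun x => ZMod.val_lt x
  have hKadj : ∀ v u : Fin j × Fin s, (multiK j s).Adj v u ↔
      (emb j s u - emb j s v).val ∈ (Ioo 0 (j*s)).filter (fun k => ¬ j ∣ k) := by
    intro v u
    constructor
    · intro h1
      have hne : u.1 ≠ v.1 := fun hc => h1 hc.symm
      have hnd : ¬ j ∣ (emb j s u - emb j s v).val := fun hc =>
        hne ((part_iff hj0 hs0 u v).2 hc)
      simp only [mem_filter, mem_Ioo]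
      refine ⟨⟨?_, hvallt _⟩, hnd⟩
      rcases Nat.eq_zero_or_pos ((emb j s u - emb j s v).val) with h0 | h0
      · exact absurd (h0 ▸ dvd_zero j) hnd
      · exact h0
    · intro h1
      simp only [mem_filter, mem_Ioo] at h1
      have hne : u.1 ≠ v.1 := fun hc => h1.2 ((part_iff hj0 hs0 u v).1 hc)
      exact fun hc => hne hc.symm
  have hKdeg : ∀ v, mdeg (multiK j s) v = (j-1)*s := by
    intro v
    rw [mdeg_eq_card (emb j s) (emb_bij hj0 hs0) _
      (fun k hk => by simp only [mem_filter, mem_Ioo] at hk; exact hk.1.2)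
      (multiK j s) v (hKadj v), card_S j s hj0 hs0]
  intro R hR
  have hsplit : ∀ v, mdeg R v + mdeg (multiK j s \ R) v = mdeg (multiK j s) v := by
    intro v
    have hun : (multiK j s).neighborSet v
        = R.neighborSet v ∪ (multiK j s \ R).neighborSet v := by
      ext u
      simp only [SimpleGraph.mem_neighborSet, Set.mem_union, SimpleGraph.sdiff_adj]
      constructor
      · intro h
        by_cases hr : R.Adj v u
        · exact Or.inl hr
        · exact Or.inr ⟨h, hr⟩
      · rintro (h | ⟨h, _⟩)
        · exact hR h
        · exact h
    have hdisj : Disjoint (R.neighborSet v) ((multiK j s \ R).neighborSet v) := by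
      rw [Set.disjoint_left]
      intro u h1 h2
      exact ((SimpleGraph.sdiff_adj _ _ _ _).1 h2).2 h1
    rw [mdeg, mdeg, mdeg, hun,
      Set.ncard_union_eq hdisj (Set.toFinite _) (Set.toFinite _)]
  set v : Fin j × Fin s := (⟨0, by omega⟩, ⟨0, by omega⟩) with hv
  have hsp := hsplit v
  rw [hKdeg v] at hsp
  by_contra hcon
  push_neg at hcon
  obtain ⟨h1, h2⟩ := hcon
  have hb1 := h1 v
  have hb2 := h2 v
  omega

lemma arrows_big (j n m : ℕ) (hj : 3 ≤ j) (hn : 3 ≤ n) (hm : 3 ≤ m) :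
    Arrows j (n + m) n m := by
  apply arrows_of_big j (n+m) n m hj (by omega)
  have hbig : 2*(n+m) ≤ (j-1)*(n+m) := Nat.mul_le_mul_right _ (by omega)
  omega

/- ### Main theorem -/

theorem stmt11 (j n m s : ℕ) (hj : 3 ≤ j) (hn : 3 ≤ n) (hm : 3 ≤ m)
    (hs : s = (n + m - 4) ⌈/⌉ (j - 1) - 1) (hs1 : 1 ≤ s) :
    ¬ Arrows j s n m ∧ (n + m - 4) ⌈/⌉ (j - 1) ≤ mj j n m := by
  have hj1 : 0 < j - 1 := by omega
  have hceil : ∀ b : ℕ, (n + m - 4) ⌈/⌉ (j - 1) ≤ b ↔ n + m - 4 ≤ (j-1) * b :=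
    fun b => ceilDiv_le_iff_le_mul hj1
  set c := (n + m - 4) ⌈/⌉ (j - 1) with hc
  have hsc : s < c := by omega
  have hbound : ∀ b : ℕ, b < c → (j-1)*b ≤ n + m - 5 := by
    intro b hb
    have h1 : ¬ (c ≤ b) := by omega
    rw [hceil b] at h1
    omega
  have hpart1 : ¬ Arrows j s n m := noArrows j s n m hj hn hm (hbound s hsc)
  refine ⟨hpart1, ?_⟩
  have hne : Set.Nonempty {s' : ℕ | Arrows j s' n m} := ⟨n + m, arrows_big j n m hj hn hm⟩
  have : c ≤ sInf {s' : ℕ | Arrows j s' n m} := by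
    apply le_csInf hne
    intro b hb
    by_contra hlt
    push_neg at hlt
    exact noArrows j b n m hj hn hm (hbound b hlt) hb
  exact this
end

section
/- For j, n, m ≥ 3 with (n+m-4) not divisible by (j-1), the size Ramsey multipartite number equals m_j(S_n, S_m) = ⌈(n+m-4)/(j-1)⌉ = ⌈(n+m-3)/(j-1)⌉. -/
/-! ### Auxiliary lemmas -/

/-- The `i`-th positive natural number that is not a multiple of `j`. -/
def gfun (j i : ℕ) : ℕ := i + 1 + i / (j - 1)

lemma gfun_mono (j : ℕ) : StrictMono (gfun j) := by
  intro a b hab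
  have : a / (j-1) ≤ b / (j-1) := Nat.div_le_div_right hab.le
  simp only [gfun]; omega

lemma gfun_mod (j i : ℕ) (hj : 2 ≤ j) : gfun j i % j = i % (j - 1) + 1 := by
  obtain ⟨k, rfl⟩ : ∃ k, j = k + 2 := ⟨j - 2, by omega⟩
  have hk1 : k + 2 - 1 = k + 1 := rfl
  have h := Nat.div_add_mod i (k + 1)
  have hr : i % (k + 1) < k + 1 := Nat.mod_lt _ (by omega)
  have heq : gfun (k+2) i = (i / (k+1)) * (k+2) + (i % (k+1) + 1) := by
    simp only [gfun, hk1]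
    set q := i / (k + 1) with hq
    set r := i % (k + 1) with hr2
    have h2 : q * (k + 2) = (k + 1) * q + q := by ring
    rw [h2]
    linarith [h]
  rw [heq, Nat.mul_add_mod', Nat.mod_eq_of_lt (by omega), hk1]

lemma gfun_not_dvd (j i : ℕ) (hj : 2 ≤ j) : ¬ j ∣ gfun j i := by
  rw [Nat.dvd_iff_mod_eq_zero, gfun_mod j i hj]; omega

lemma gfun_pos (j i : ℕ) : 0 < gfun j i := by simp [gfun]

lemma gfun_bound (j s i : ℕ) (hj : 2 ≤ j) (h : 2 * (i + 1) ≤ (j - 1) * s) :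
    2 * gfun j i < j * s := by
  obtain ⟨k, rfl⟩ : ∃ k, j = k + 2 := ⟨j - 2, by omega⟩
  have hk1 : k + 2 - 1 = k + 1 := rfl
  rw [hk1] at h
  have h1 : i / (k + 1) * (k + 1) ≤ i := Nat.div_mul_le_self i (k + 1)
  have key : (k + 1) * (2 * gfun (k+2) i) < (k + 1) * ((k + 2) * s) := by
    simp only [gfun, hk1]
    nlinarith [h, h1]
  exact Nat.lt_of_mul_lt_mul_left key

lemma mdeg_le {V : Type*} [Fintype V] {G R : SimpleGraph V} (h : R ≤ G) (v : V) :
    mdeg R v ≤ mdeg G v :=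
  Set.ncard_le_ncard (fun w hw => h hw) (Set.toFinite _)

lemma mdeg_sdiff {V : Type*} [Fintype V] (G R : SimpleGraph V) (h : R ≤ G) (v : V) :
    mdeg (G \ R) v = mdeg G v - mdeg R v := by
  have hset : (G \ R).neighborSet v = G.neighborSet v \ R.neighborSet v := by
    ext w; simp [SimpleGraph.neighborSet]
  have hsub : R.neighborSet v ⊆ G.neighborSet v := fun w hw => h hw
  rw [mdeg, hset, Set.ncard_diff hsub (Set.toFinite _)]; rfl

lemma mdeg_multiK (j s : ℕ) (v : Fin j × Fin s) : mdeg (multiK j s) v = (j - 1) * s := by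
  have h1 : (multiK j s).neighborSet v = {w | w.1 ≠ v.1} := by
    ext w; simp [multiK, SimpleGraph.neighborSet, ne_comm]
  rw [mdeg, h1]
  rw [← Nat.card_coe_set_eq, Nat.card_eq_fintype_card]
  have e : {w : Fin j × Fin s // w.1 ≠ v.1} ≃ {a : Fin j // a ≠ v.1} × Fin s :=
    { toFun := fun w => (⟨w.1.1, w.2⟩, w.1.2)
      invFun := fun p => ⟨(p.1.1, p.2), p.1.2⟩
      left_inv := fun w => rfl
      right_inv := fun p => rfl }
  rw [show Fintype.card ↑{w : Fin j × Fin s | w.1 ≠ v.1} = _ from Fintype.card_congr e]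
  simp [Fintype.card_subtype_compl, Fintype.card_subtype_eq]

/-- For every even `e ≤ (j-1)s` there is an `e`-regular spanning subgraph of `K_{j×s}`,
built as a circulant graph via an identification of the vertices with `ZMod (j*s)`. -/
lemma exists_regular (j s e : ℕ) (hj : 3 ≤ j) (he : Even e) (hle : e ≤ (j - 1) * s) :
    ∃ R : SimpleGraph (Fin j × Fin s), R ≤ multiK j s ∧ ∀ v, mdeg R v = e := by
  rcases Nat.eq_zero_or_pos e with rfl | hepos
  · exact ⟨⊥, bot_le, fun v => by simp [mdeg, SimpleGraph.neighborSet]⟩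
  obtain ⟨t, rfl⟩ : ∃ t, e = 2 * t := ⟨e / 2, by rcases he with ⟨k, rfl⟩; omega⟩
  have ht : 0 < t := by omega
  have hs : 0 < s := by
    rcases Nat.eq_zero_or_pos s with rfl | h
    · simp at hle; omega
    · exact h
  set N := j * s with hN
  haveI : NeZero N := ⟨by positivity⟩
  have hglt : ∀ i < t, 2 * gfun j i < N := by
    intro i hi
    exact gfun_bound j s i (by omega) (le_trans (by omega) hle)
  have hgN : ∀ i < t, gfun j i < N := fun i hi => by have := hglt i hi; omega
  -- the identification with `ZMod N`
  let f : Fin j × Fin s → ZMod N := fun u => ((u.1.val + j * u.2.val : ℕ) : ZMod N)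
  have hval : ∀ u : Fin j × Fin s, u.1.val + j * u.2.val < N := by
    intro u
    have h1 : u.1.val < j := u.1.2
    have h2 : j * (u.2.val + 1) ≤ j * s := Nat.mul_le_mul_left _ u.2.2
    have h3 : j * (u.2.val + 1) = j * u.2.val + j := by ring
    rw [hN]; linarith
  have hf_inj : Function.Injective f := by
    intro u v huv
    have hv := congrArg ZMod.val huv
    rw [ZMod.val_cast_of_lt (hval u), ZMod.val_cast_of_lt (hval v)] at hv
    have h1 : u.1.val % j = v.1.val % j := by
      have := congrArg (· % j) hv
      simpa [Nat.add_mul_mod_self_left] using this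
    rw [Nat.mod_eq_of_lt u.1.2, Nat.mod_eq_of_lt v.1.2] at h1
    have h2 : u.2.val = v.2.val := by
      have : j * u.2.val = j * v.2.val := by omega
      exact Nat.eq_of_mul_eq_mul_left (by omega) this
    exact Prod.ext (Fin.ext h1) (Fin.ext h2)
  have hf_bij : Function.Bijective f :=
    (Fintype.bijective_iff_injective_and_card f).mpr ⟨hf_inj, by simp [ZMod.card]; exact hN.symm⟩
  -- the projection onto `ZMod j` detecting the parts
  let ψ : ZMod N →+* ZMod j := ZMod.castHom ⟨s, rfl⟩ (ZMod j)
  have hψ : ∀ u : Fin j × Fin s, ψ (f u) = (u.1.val : ZMod j) := by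
    intro u
    show ψ ((u.1.val + j * u.2.val : ℕ) : ZMod N) = _
    rw [map_natCast]
    push_cast
    simp [ZMod.natCast_self]
  -- the symmetric connection set
  set Tz : Finset (ZMod N) :=
      ((Finset.range t).image fun i => ((gfun j i : ℕ) : ZMod N)) ∪
      ((Finset.range t).image fun i => -((gfun j i : ℕ) : ZMod N)) with hTz
  have hcast_inj : ∀ i < t, ∀ i' < t,
      ((gfun j i : ℕ) : ZMod N) = ((gfun j i' : ℕ) : ZMod N) → i = i' := by
    intro i hi i' hi' h
    have := congrArg ZMod.val h
    rw [ZMod.val_cast_of_lt (hgN i hi), ZMod.val_cast_of_lt (hgN i' hi')] at this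
    exact (gfun_mono j).injective this
  have hne_neg : ∀ i < t, ∀ i' < t,
      ((gfun j i : ℕ) : ZMod N) ≠ -((gfun j i' : ℕ) : ZMod N) := by
    intro i hi i' hi' h
    have hzero : ((gfun j i + gfun j i' : ℕ) : ZMod N) = 0 := by
      push_cast
      rw [h]; ring
    rw [ZMod.natCast_eq_zero_iff] at hzero
    have hlt : gfun j i + gfun j i' < N := by
      have := hglt i hi; have := hglt i' hi'; omega
    have hpos : 0 < gfun j i + gfun j i' := by have := gfun_pos j i; omega
    exact absurd (Nat.le_of_dvd hpos hzero) (by omega)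
  have hTcard : Tz.card = 2 * t := by
    rw [hTz, Finset.card_union_of_disjoint]
    · rw [Finset.card_image_of_injOn, Finset.card_image_of_injOn, Finset.card_range]
      · ring
      · intro i hi i' hi' h
        simp only [Finset.mem_coe, Finset.mem_range] at hi hi'
        have : ((gfun j i : ℕ) : ZMod N) = ((gfun j i' : ℕ) : ZMod N) := by
          have := congrArg Neg.neg h; simpa using this
        exact hcast_inj i hi i' hi' this
      · intro i hi i' hi' h
        simp only [Finset.mem_coe, Finset.mem_range] at hi hi'
        exact hcast_inj i hi i' hi' h
    · rw [Finset.disjoint_left]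
      intro x hx hx'
      simp only [Finset.mem_image, Finset.mem_range] at hx hx'
      obtain ⟨i, hi, rfl⟩ := hx
      obtain ⟨i', hi', h⟩ := hx'
      exact hne_neg i hi i' hi' h.symm
  have hTneg : ∀ x ∈ Tz, -x ∈ Tz := by
    intro x hx
    rw [hTz, Finset.mem_union] at hx ⊢
    simp only [Finset.mem_image, Finset.mem_range] at hx ⊢
    rcases hx with ⟨i, hi, rfl⟩ | ⟨i, hi, rfl⟩
    · exact Or.inr ⟨i, hi, rfl⟩
    · exact Or.inl ⟨i, hi, by rw [neg_neg]⟩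
  have hTpsi : ∀ x ∈ Tz, ψ x ≠ 0 := by
    intro x hx
    rw [hTz, Finset.mem_union] at hx
    simp only [Finset.mem_image, Finset.mem_range] at hx
    have key : ∀ i < t, ψ ((gfun j i : ℕ) : ZMod N) ≠ 0 := by
      intro i hi
      rw [map_natCast, Ne, ZMod.natCast_eq_zero_iff]
      exact gfun_not_dvd j i (by omega)
    rcases hx with ⟨i, hi, rfl⟩ | ⟨i, hi, rfl⟩
    · exact key i hi
    · rw [map_neg, neg_ne_zero]; exact key i hi
  have h0 : (0 : ZMod N) ∉ Tz := fun h => hTpsi 0 h (map_zero ψ)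
  -- the circulant red graph
  refine ⟨{ Adj := fun u v => f u - f v ∈ Tz
            symm := ⟨fun u v h => by
              have := hTneg _ h; rwa [neg_sub] at this⟩
            loopless := ⟨fun u h => h0 (by simpa using h)⟩ }, ?_, ?_⟩
  · intro u v h
    simp only at h
    intro hEq
    apply hTpsi _ h
    rw [map_sub, hψ, hψ, hEq, sub_self]
  · intro v
    show ((fun w => f v - f w) ⁻¹' (Tz : Set (ZMod N))).ncard = 2 * t
    rw [Set.ncard_preimage_of_injective_subset_range]
    · rw [Set.ncard_coe_finset, hTcard]
    · intro a b hab
      exact hf_inj (sub_right_injective hab)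
    · intro x hx
      obtain ⟨w, hw⟩ := hf_bij.2 (f v - x)
      exact ⟨w, by simp only []; rw [hw]; ring⟩

lemma arrows_of_le (j s n m : ℕ) (hj : 3 ≤ j) (hn : 3 ≤ n) (hm : 3 ≤ m)
    (h : n + m - 3 ≤ (j - 1) * s) : Arrows j s n m := by
  have hs : 0 < s := by
    rcases Nat.eq_zero_or_pos s with rfl | h'
    · simp at h; omega
    · exact h'
  intro R hR
  by_contra hcon
  push_neg at hcon
  obtain ⟨h1, h2⟩ := hcon
  set v : Fin j × Fin s := (⟨0, by omega⟩, ⟨0, hs⟩) with hv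
  have hd1 : mdeg R v < n - 1 := h1 v
  have hd2 : mdeg (multiK j s \ R) v < m - 1 := h2 v
  rw [mdeg_sdiff _ _ hR, mdeg_multiK] at hd2
  have hle := mdeg_le hR v
  rw [mdeg_multiK] at hle
  obtain ⟨K, hK⟩ : ∃ K, (j - 1) * s = K := ⟨_, rfl⟩
  rw [hK] at h hd2 hle
  omega

lemma not_arrows_of_lt (j s n m : ℕ) (hj : 3 ≤ j) (hn : 3 ≤ n) (hm : 3 ≤ m)
    (hdvd : ¬ (j - 1) ∣ (n + m - 4)) (h : (j - 1) * s ≤ n + m - 4) :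
    ¬ Arrows j s n m := by
  have hreg := fun e he hle => exists_regular j s e hj he hle
  have hne : (j - 1) * s ≠ n + m - 4 := by
    intro heq
    exact hdvd (heq ▸ Dvd.intro s rfl)
  obtain ⟨K, hK⟩ : ∃ K, (j - 1) * s = K := ⟨_, rfl⟩
  rw [hK] at h hne
  have hexists : ∃ e, Even e ∧ e ≤ K ∧ e ≤ n - 2 ∧ K - e ≤ m - 2 := by
    rcases le_or_gt K (m - 2) with hA | hB
    · exact ⟨0, Even.zero, by omega, by omega, by omega⟩
    · set d := K - (m - 2) with hd
      rcases Nat.even_or_odd d with hev | hodd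
      · exact ⟨d, hev, by omega, by omega, by omega⟩
      · exact ⟨d + 1, by rcases hodd with ⟨k, hk⟩; exact ⟨k + 1, by omega⟩,
          by omega, by omega, by omega⟩
  obtain ⟨e, he, he1, he2, he3⟩ := hexists
  obtain ⟨R, hle, hdeg⟩ := hreg e he (by omega)
  intro hA
  rcases hA R hle with ⟨v, hv⟩ | ⟨v, hv⟩
  · rw [hdeg] at hv; omega
  · rw [mdeg_sdiff _ _ hle, mdeg_multiK, hdeg, hK] at hv; omega

theorem stmt12 (j n m : ℕ) (hj : 3 ≤ j) (hn : 3 ≤ n) (hm : 3 ≤ m)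
    (hdvd : ¬ (j - 1) ∣ (n + m - 4)) :
    mj j n m = (n + m - 4) ⌈/⌉ (j - 1) ∧
      (n + m - 4) ⌈/⌉ (j - 1) = (n + m - 3) ⌈/⌉ (j - 1) := by
  have hq : 0 < j - 1 := by omega
  have hceil : (n + m - 4) ⌈/⌉ (j - 1) = (n + m - 3) ⌈/⌉ (j - 1) := by
    rw [Nat.ceilDiv_eq_add_pred_div, Nat.ceilDiv_eq_add_pred_div]
    have h1 : n + m - 3 + (j - 1) - 1 = (n + m - 4 + (j - 1) - 1) + 1 := by omega
    rw [h1, Nat.succ_div, if_neg, add_zero]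
    intro hdq
    have h2 : n + m - 4 + (j - 1) - 1 + 1 = (n + m - 4) + (j - 1) := by omega
    rw [h2] at hdq
    exact hdvd ((Nat.dvd_add_self_right).mp hdq)
  refine ⟨?_, hceil⟩
  rw [hceil]
  set c := (n + m - 3) ⌈/⌉ (j - 1) with hc
  have hmem : Arrows j c n m :=
    arrows_of_le j c n m hj hn hm ((ceilDiv_le_iff_le_mul hq).mp le_rfl)
  have hmin : ∀ x, Arrows j x n m → c ≤ x := by
    intro x hx
    by_contra hlt
    push_neg at hlt
    have hnotle : ¬ (n + m - 3 ≤ (j - 1) * x) := by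
      intro hle
      exact absurd ((ceilDiv_le_iff_le_mul hq).mpr hle) (by omega)
    exact not_arrows_of_lt j x n m hj hn hm hdvd (by omega) hx
  exact le_antisymm (Nat.sInf_le hmem) (le_csInf ⟨c, hmem⟩ fun x hx => hmin x hx)
end
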